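/- Let (x_t) be the one-dimensional process x_0 = 0, x_t = w x_{t−1} + ξ_t with ξ_t i.i.d. N(0, σ²) and 0 < w < 1. Then lim_{t→∞} (1/t²) E[(Σ_{i=1}^{t} x_i x_{i−1})² x_t²] = σ⁶ w² / (1 − w²)³. -/

import Mathlib

open MeasureTheory ProbabilityTheory Filter Finset

open Real

/-- Contraction limit lemma. -/
lemma aux_contract {u c b : ℕ → ℝ} {γ β : ℝ} (hγ0 : 0 ≤ γ) (hγ1 : γ < 1)
    (hc : Tendsto c atTop (nhds γ)) (hc0 : ∀ t, 0 ≤ c t)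
    (hb : Tendsto b atTop (nhds β))
    (hu : ∀ t, 1 ≤ t → u (t + 1) = c t * u t + b t) :
    Tendsto u atTop (nhds (β / (1 - γ))) := by
  set L := β / (1 - γ) with hL
  have h1γ : (0:ℝ) < 1 - γ := by linarith
  set e : ℕ → ℝ := fun t => u t - L with he
  set r : ℕ → ℝ := fun t => b t + (c t - 1) * L with hr
  have hrlim : Tendsto r atTop (nhds 0) := by
    have h : Tendsto r atTop (nhds (β + (γ - 1) * L)) :=
      hb.add ((hc.sub tendsto_const_nhds).mul tendsto_const_nhds)
    convert h using 2
    rw [hL]; field_simp; ring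
  have herec : ∀ t, 1 ≤ t → e (t + 1) = c t * e t + r t := by
    intro t ht
    simp only [he, hr, hu t ht]; ring
  have key : Tendsto e atTop (nhds 0) := by
    rw [NormedAddCommGroup.tendsto_nhds_zero]
    intro ε hε
    set c' : ℝ := (1 + γ) / 2 with hc'
    have hc'0 : 0 < c' := by rw [hc']; linarith
    have hc'1 : c' < 1 := by rw [hc']; linarith
    have hγc' : γ < c' := by rw [hc']; linarith
    have hδ : (0:ℝ) < (1 - c') * (ε / 2) := mul_pos (by linarith) (by linarith)
    have h1 : ∀ᶠ t in atTop, c t ≤ c' := hc.eventually_le_const hγc'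
    have h2 : ∀ᶠ t in atTop, |r t| ≤ (1 - c') * (ε / 2) := by
      filter_upwards [(show Tendsto (fun t => |r t|) atTop (nhds 0) by simpa using hrlim.abs).eventually_lt_const hδ] with t ht
      simpa using ht.le
    obtain ⟨N, hN⟩ := (h1.and (h2.and (eventually_ge_atTop 1))).exists_forall_of_atTop
    have bound : ∀ t, N ≤ t → |e t| ≤ c' ^ (t - N) * |e N| + ε / 2 := by
      intro t ht
      induction t, ht using Nat.le_induction with
      | base => simp; positivity
      | succ t ht ih =>
        have hrec := herec t (le_trans (hN N le_rfl).2.2 ht)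
        have hct : c t ≤ c' := (hN t ht).1
        have hrt : |r t| ≤ (1 - c') * (ε / 2) := (hN t ht).2.1
        have hstep : |e (t + 1)| ≤ c' * |e t| + (1 - c') * (ε / 2) := by
          rw [hrec]
          calc |c t * e t + r t| ≤ |c t * e t| + |r t| := abs_add_le _ _
            _ ≤ c' * |e t| + (1 - c') * (ε / 2) := by
                rw [abs_mul, abs_of_nonneg (hc0 t)]
                exact add_le_add (mul_le_mul_of_nonneg_right hct (abs_nonneg _)) hrt
        calc |e (t + 1)| ≤ c' * |e t| + (1 - c') * (ε / 2) := hstep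
          _ ≤ c' * (c' ^ (t - N) * |e N| + ε / 2) + (1 - c') * (ε / 2) := by
              refine add_le_add ?_ le_rfl
              exact mul_le_mul_of_nonneg_left ih hc'0.le
          _ = c' ^ (t + 1 - N) * |e N| + ε / 2 := by
              have hts : t + 1 - N = (t - N) + 1 := by omega
              rw [hts, pow_succ]; ring
    have hdecay : Tendsto (fun t : ℕ => c' ^ (t - N) * |e N|) atTop (nhds 0) := by
      have h0 : Tendsto (fun k : ℕ => c' ^ k * |e N|) atTop (nhds 0) := by
        simpa using (tendsto_pow_atTop_nhds_zero_of_lt_one hc'0.le hc'1).mul_const |e N|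
      exact h0.comp (tendsto_sub_atTop_nat N)
    filter_upwards [hdecay.eventually_lt_const (by positivity : (0:ℝ) < ε / 2),
      eventually_ge_atTop N] with t h1t h2t
    have hbt := bound t h2t
    have : |e t| < ε := by linarith
    simpa [Real.norm_eq_abs] using this
  have hfin : Tendsto (fun t => e t + L) atTop (nhds (0 + L)) := key.add_const L
  simpa [he] using hfin

/-- Quadratic Cesàro. -/
lemma aux_cesaro_sq {d : ℕ → ℝ} {δ : ℝ}
    (hd : Tendsto (fun t : ℕ => d t / t) atTop (nhds δ)) :
    Tendsto (fun t : ℕ => (∑ i ∈ range t, d i) / (t : ℝ) ^ 2) atTop (nhds (δ / 2)) := by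
  set g : ℕ → ℝ := fun i => d i / i - δ with hg
  have hg0 : Tendsto g atTop (nhds 0) := by
    simpa [hg] using hd.sub_const δ
  set B : ℕ → ℝ := fun t => ∑ i ∈ range t, (d i - δ * i) with hB
  have habs : ∀ i : ℕ, 1 ≤ i → |d i - δ * i| = i * |g i| := by
    intro i hi
    have hi0 : (i:ℝ) ≠ 0 := Nat.cast_ne_zero.mpr (by omega)
    rw [hg, ← abs_of_nonneg (Nat.cast_nonneg i : (0:ℝ) ≤ i), ← abs_mul]
    congr 1
    field_simp
    rw [abs_of_nonneg (Nat.cast_nonneg (α := ℝ) i)]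
  -- bound |B t| ≤ |d 0| + t * ∑_{i<t} |g i|
  have hBbound : ∀ t : ℕ, |B t| ≤ |d 0| + t * ∑ i ∈ range t, |g i| := by
    intro t
    have h1 : |B t| ≤ ∑ i ∈ range t, |d i - δ * i| := by
      exact (Finset.abs_sum_le_sum_abs _ _)
    refine h1.trans ?_
    have h2 : ∀ i ∈ range t, |d i - δ * i| ≤ (if i = 0 then |d 0| else 0) + t * |g i| := by
      intro i hi
      rcases Nat.eq_zero_or_pos i with h0 | h0
      · subst h0
        simp
        positivity
      · rw [habs i h0, if_neg (by omega)]
        have : (i:ℝ) ≤ t := by exact_mod_cast (mem_range.mp hi).le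
        have := mul_le_mul_of_nonneg_right this (abs_nonneg (g i))
        linarith
    refine (Finset.sum_le_sum h2).trans ?_
    rw [Finset.sum_add_distrib, ← Finset.mul_sum]
    refine add_le_add ?_ le_rfl
    rcases Nat.eq_zero_or_pos t with h0 | h0
    · subst h0; simp
    · rw [Finset.sum_ite_eq' (range t) 0 (fun _ => |d 0|)]
      simp [mem_range.mpr h0]
  have hBlim : Tendsto (fun t : ℕ => B t / (t : ℝ) ^ 2) atTop (nhds 0) := by
    rw [tendsto_zero_iff_abs_tendsto_zero]
    apply squeeze_zero (fun t => abs_nonneg _)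
      (g := fun t : ℕ => |d 0| / (t:ℝ)^2 + (t:ℝ)⁻¹ * ∑ i ∈ range t, |g i|)
    · intro t
      rcases Nat.eq_zero_or_pos t with h0 | h0
      · subst h0; simp [hB]
      · have ht0 : (0:ℝ) < t := by exact_mod_cast h0
        rw [abs_div, abs_of_nonneg (by positivity : (0:ℝ) ≤ (t:ℝ)^2)]
        rw [div_le_iff₀ (by positivity)]
        have := hBbound t
        have hsum : (0:ℝ) ≤ ∑ i ∈ range t, |g i| := Finset.sum_nonneg fun _ _ => abs_nonneg _
        have hexp : (|d 0| / (t:ℝ)^2 + (t:ℝ)⁻¹ * ∑ i ∈ range t, |g i|) * (t:ℝ)^2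
            = |d 0| + t * ∑ i ∈ range t, |g i| := by
          field_simp
        rw [hexp]
        exact this
    · have c1 : Tendsto (fun t : ℕ => |d 0| / (t:ℝ)^2) atTop (nhds 0) := by
        apply Tendsto.div_atTop tendsto_const_nhds
        exact (tendsto_pow_atTop (two_ne_zero)).comp (tendsto_natCast_atTop_atTop (R := ℝ))
      have c2 : Tendsto (fun t : ℕ => (t:ℝ)⁻¹ * ∑ i ∈ range t, |g i|) atTop (nhds 0) :=
        Filter.Tendsto.cesaro (by simpa using hg0.abs)
      simpa using c1.add c2
  -- now combine
  have hid : ∀ t : ℕ, (∑ i ∈ range t, (i:ℝ)) = (t:ℝ) * ((t:ℝ) - 1) / 2 := by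
    intro t
    induction t with
    | zero => simp
    | succ n ih =>
      rw [Finset.sum_range_succ, ih]
      push_cast
      ring
  have hsplit : ∀ t : ℕ, 1 ≤ t → (∑ i ∈ range t, d i) / (t : ℝ) ^ 2
      = B t / (t:ℝ)^2 + δ * ((t:ℝ) * ((t:ℝ) - 1) / 2) / (t:ℝ)^2 := by
    intro t ht
    have : (∑ i ∈ range t, d i) = B t + δ * ((t:ℝ) * ((t:ℝ) - 1) / 2) := by
      rw [hB, ← hid t, Finset.mul_sum, ← Finset.sum_add_distrib]
      congr 1; funext i; ring_nf
    rw [this, add_div]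
  have hmain : Tendsto (fun t : ℕ => B t / (t:ℝ)^2 + δ * ((t:ℝ) * ((t:ℝ) - 1) / 2) / (t:ℝ)^2)
      atTop (nhds (δ / 2)) := by
    have c2 : Tendsto (fun t : ℕ => δ * ((t:ℝ) * ((t:ℝ) - 1) / 2) / (t:ℝ)^2) atTop (nhds (δ / 2)) := by
      have heq : ∀ᶠ t : ℕ in atTop, δ / 2 * (1 - 1/(t:ℝ))
          = δ * ((t:ℝ) * ((t:ℝ) - 1) / 2) / (t:ℝ)^2 := by
        filter_upwards [eventually_ge_atTop 1] with t ht
        have ht0 : (t:ℝ) ≠ 0 := Nat.cast_ne_zero.mpr (by omega)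
        field_simp
      have hlim2 : Tendsto (fun t : ℕ => δ / 2 * (1 - 1/(t:ℝ))) atTop (nhds (δ / 2)) := by
        have h3 : Tendsto (fun t : ℕ => 1/((t:ℝ))) atTop (nhds 0) := by
          exact tendsto_one_div_atTop_nhds_zero_nat
        have := (tendsto_const_nhds (x := (1:ℝ)) (f := atTop (α := ℕ))).sub h3
        simpa using (this.const_mul (δ / 2))
      exact hlim2.congr' heq
    simpa using hBlim.add c2
  apply Tendsto.congr' ?_ hmain
  filter_upwards [eventually_ge_atTop 1] with t ht
  exact (hsplit t ht).symm

section GaussMoments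

variable {b : ℝ}

lemma aux_int_pow_gauss (hb : 0 < b) (k : ℕ) :
    Integrable (fun x : ℝ => x ^ k * exp (-b * x ^ 2)) := by
  have h := integrable_rpow_mul_exp_neg_mul_sq hb (s := (k:ℝ)) (lt_of_lt_of_le neg_one_lt_zero (Nat.cast_nonneg k))
  simpa [Real.rpow_natCast] using h

lemma aux_J_odd (hb : 0 < b) (n : ℕ) :
    ∫ x : ℝ, x ^ (2 * n + 1) * exp (-b * x ^ 2) = 0 := by
  have h := MeasureTheory.integral_neg_eq_self
    (fun x : ℝ => x ^ (2 * n + 1) * exp (-b * x ^ 2)) volume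
  have h2 : ∫ x : ℝ, (-x) ^ (2 * n + 1) * exp (-b * (-x) ^ 2)
      = -∫ x : ℝ, x ^ (2 * n + 1) * exp (-b * x ^ 2) := by
    rw [← integral_neg]
    congr 1; funext x
    rw [Odd.neg_pow ⟨n, by ring⟩, neg_sq]
    ring
  rw [h2] at h
  linarith

lemma aux_J_even_Ioi (hb : 0 < b) (n : ℕ) :
    ∫ x : ℝ in Set.Ioi (0:ℝ), x ^ (2 * n) * exp (-b * x ^ 2)
      = b ^ (-(((2 * n : ℕ) : ℝ) + 1) / 2) * (1 / 2) * Real.Gamma ((((2 * n : ℕ) :ℝ) + 1) / 2) := by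
  have h := integral_rpow_mul_exp_neg_mul_rpow (p := 2) (q := ((2 * n : ℕ) : ℝ))
    (by norm_num) (lt_of_lt_of_le neg_one_lt_zero (Nat.cast_nonneg _)) hb
  rw [← h]
  refine setIntegral_congr_fun measurableSet_Ioi (fun x hx => ?_)
  rw [Real.rpow_natCast, Real.rpow_two]

lemma aux_J_even (hb : 0 < b) (n : ℕ) :
    ∫ x : ℝ, x ^ (2 * n) * exp (-b * x ^ 2)
      = 2 * (b ^ (-(((2 * n : ℕ) : ℝ) + 1) / 2) * (1 / 2) * Real.Gamma ((((2 * n : ℕ) :ℝ) + 1) / 2)) := by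
  rw [← aux_J_even_Ioi hb n, ← integral_comp_abs (f := fun x => x ^ (2 * n) * exp (-b * x ^ 2))]
  congr 1; funext x
  rw [pow_mul, pow_mul, sq_abs]

lemma aux_J_rec (hb : 0 < b) (n : ℕ) :
    ∫ x : ℝ, x ^ (2 * (n+1)) * exp (-b * x ^ 2)
      = ((2 * n + 1) / (2 * b)) * ∫ x : ℝ, x ^ (2 * n) * exp (-b * x ^ 2) := by
  rw [aux_J_even hb n, aux_J_even hb (n+1)]
  have e1 : ((((2 * (n+1) : ℕ)) : ℝ) + 1) / 2 = ((((2 * n : ℕ)) : ℝ) + 1) / 2 + 1 := by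
    push_cast; ring
  have e2 : b ^ (-((((2 * (n+1) : ℕ)) : ℝ) + 1) / 2)
      = b ^ (-(((2 * n : ℕ) : ℝ) + 1) / 2) * b⁻¹ := by
    rw [← Real.rpow_neg_one b, ← Real.rpow_add hb]
    congr 1
    push_cast; ring
  rw [e1, e2, Real.Gamma_add_one (by positivity)]
  have hg : ((((2 * n : ℕ)) : ℝ) + 1) / 2 = ((2 * n : ℝ) + 1) / 2 := by push_cast; ring
  rw [hg]
  field_simp

end GaussMoments

section GaussReal

lemma aux_integral_gaussianReal {σ : ℝ} (hσ : 0 < σ) (f : ℝ → ℝ) (hf : Measurable f) :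
    ∫ y, f y ∂(gaussianReal 0 (Real.toNNReal (σ ^ 2)))
      = ∫ y, gaussianPDFReal 0 (Real.toNNReal (σ ^ 2)) y * f y := by
  set v := Real.toNNReal (σ ^ 2) with hv
  have hv0 : v ≠ 0 := by
    simp [hv, Real.toNNReal_eq_zero]
    positivity
  rw [gaussianReal_of_var_ne_zero 0 hv0]
  have hpdf : gaussianPDF 0 v = fun y => ((gaussianPDFReal 0 v y).toNNReal : ENNReal) := rfl
  rw [hpdf]
  rw [integral_withDensity_eq_integral_smul
    ((measurable_gaussianPDFReal 0 v).real_toNNReal) f]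
  congr 1; funext y
  rw [NNReal.smul_def, smul_eq_mul, Real.coe_toNNReal _ (gaussianPDFReal_nonneg 0 v y)]

lemma aux_integrable_gaussianReal {σ : ℝ} (hσ : 0 < σ) (f : ℝ → ℝ) :
    Integrable f (gaussianReal 0 (Real.toNNReal (σ ^ 2)))
      ↔ Integrable (fun y => f y * gaussianPDFReal 0 (Real.toNNReal (σ ^ 2)) y) := by
  set v := Real.toNNReal (σ ^ 2) with hv
  have hv0 : v ≠ 0 := by
    simp [hv, Real.toNNReal_eq_zero]
    positivity
  rw [gaussianReal_of_var_ne_zero 0 hv0]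
  rw [integrable_withDensity_iff (measurable_gaussianPDF 0 v)
    (ae_of_all _ fun x => ENNReal.ofReal_lt_top)]
  constructor <;> intro h <;> refine h.congr (ae_of_all _ fun y => ?_) <;>
    simp [gaussianPDF_def, ENNReal.toReal_ofReal (gaussianPDFReal_nonneg 0 v y)]

end GaussReal

section GaussValues

variable {σ : ℝ}

lemma aux_pdf_eq (hσ : 0 < σ) (y : ℝ) :
    gaussianPDFReal 0 (Real.toNNReal (σ ^ 2)) y
      = (Real.sqrt (2 * π * σ ^ 2))⁻¹ * exp (-((2 * σ ^ 2)⁻¹) * y ^ 2) := by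
  rw [gaussianPDFReal]
  have hv : ((Real.toNNReal (σ ^ 2) : NNReal) : ℝ) = σ ^ 2 :=
    Real.coe_toNNReal _ (by positivity)
  rw [hv]
  congr 1
  have hσ2 : σ ^ 2 ≠ 0 := by positivity
  field_simp
  simp only [sub_zero]

lemma aux_M_int (hσ : 0 < σ) (k : ℕ) :
    ∫ y, y ^ k ∂(gaussianReal 0 (Real.toNNReal (σ ^ 2)))
      = (Real.sqrt (2 * π * σ ^ 2))⁻¹ * ∫ y : ℝ, y ^ k * exp (-((2 * σ ^ 2)⁻¹) * y ^ 2) := by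
  rw [aux_integral_gaussianReal hσ (fun y => y ^ k) (measurable_id.pow_const k)]
  rw [← integral_const_mul]
  congr 1; funext y
  rw [aux_pdf_eq hσ y]
  ring

lemma aux_integrable_pow_gaussianReal (hσ : 0 < σ) (k : ℕ) :
    Integrable (fun y : ℝ => y ^ k) (gaussianReal 0 (Real.toNNReal (σ ^ 2))) := by
  rw [aux_integrable_gaussianReal hσ]
  have hb : (0:ℝ) < (2 * σ ^ 2)⁻¹ := by positivity
  have h := (aux_int_pow_gauss hb k).const_mul (Real.sqrt (2 * π * σ ^ 2))⁻¹
  refine h.congr (ae_of_all _ fun y => ?_)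
  simp only [aux_pdf_eq hσ y]
  ring

lemma aux_M_odd (hσ : 0 < σ) (n : ℕ) :
    ∫ y, y ^ (2 * n + 1) ∂(gaussianReal 0 (Real.toNNReal (σ ^ 2))) = 0 := by
  rw [aux_M_int hσ, aux_J_odd (by positivity : (0:ℝ) < (2 * σ ^ 2)⁻¹) n, mul_zero]

lemma aux_M_zero (hσ : 0 < σ) :
    ∫ y, y ^ 0 ∂(gaussianReal 0 (Real.toNNReal (σ ^ 2))) = 1 := by
  simp

lemma aux_M_rec (hσ : 0 < σ) (n : ℕ) :
    ∫ y, y ^ (2 * (n + 1)) ∂(gaussianReal 0 (Real.toNNReal (σ ^ 2)))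
      = ((2 * n + 1) * σ ^ 2) * ∫ y, y ^ (2 * n) ∂(gaussianReal 0 (Real.toNNReal (σ ^ 2))) := by
  have hb : (0:ℝ) < (2 * σ ^ 2)⁻¹ := by positivity
  rw [aux_M_int hσ, aux_M_int hσ, aux_J_rec hb n]
  have hσ2 : σ ^ 2 ≠ 0 := by positivity
  have : (2 * (n:ℝ) + 1) / (2 * (2 * σ ^ 2)⁻¹) = (2 * n + 1) * σ ^ 2 := by
    field_simp
  rw [this]
  ring

lemma aux_M_two (hσ : 0 < σ) :
    ∫ y, y ^ 2 ∂(gaussianReal 0 (Real.toNNReal (σ ^ 2))) = σ ^ 2 := by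
  have h := aux_M_rec hσ 0
  norm_num at h
  rw [h]

lemma aux_M_four (hσ : 0 < σ) :
    ∫ y, y ^ 4 ∂(gaussianReal 0 (Real.toNNReal (σ ^ 2))) = 3 * σ ^ 4 := by
  have h := aux_M_rec hσ 1
  norm_num at h
  rw [h, aux_M_two hσ]
  ring

lemma aux_M_six (hσ : 0 < σ) :
    ∫ y, y ^ 6 ∂(gaussianReal 0 (Real.toNNReal (σ ^ 2))) = 15 * σ ^ 6 := by
  have h := aux_M_rec hσ 2
  norm_num at h
  rw [h, aux_M_four hσ]
  ring

lemma aux_M_one (hσ : 0 < σ) :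
    ∫ y, y ^ 1 ∂(gaussianReal 0 (Real.toNNReal (σ ^ 2))) = 0 := by
  have h := aux_M_odd hσ 0
  norm_num at h
  simpa using h

lemma aux_M_three (hσ : 0 < σ) :
    ∫ y, y ^ 3 ∂(gaussianReal 0 (Real.toNNReal (σ ^ 2))) = 0 := by
  have h := aux_M_odd hσ 1
  norm_num at h
  exact h

lemma aux_M_five (hσ : 0 < σ) :
    ∫ y, y ^ 5 ∂(gaussianReal 0 (Real.toNNReal (σ ^ 2))) = 0 := by
  have h := aux_M_odd hσ 2
  norm_num at h
  exact h

end GaussValues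

section Nice

variable {Ω : Type*} [MeasurableSpace Ω] {μ : Measure Ω} [IsProbabilityMeasure μ]

/-- All natural moments exist. -/
def AuxNice (μ : Measure Ω) (f : Ω → ℝ) : Prop :=
  Measurable f ∧ ∀ k : ℕ, Integrable (fun ω => f ω ^ k) μ

lemma aux_pow_add_le {a b : ℝ} (ha : 0 ≤ a) (hb : 0 ≤ b) (k : ℕ) :
    (a + b) ^ k ≤ 2 ^ k * (a ^ k + b ^ k) := by
  have h1 : a + b ≤ 2 * max a b := by
    rcases le_total a b with h | h
    · have := max_eq_right h; rw [this]; linarith [le_max_right a b]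
    · have := max_eq_left h; rw [this]; linarith [le_max_left a b]
  calc (a + b) ^ k ≤ (2 * max a b) ^ k :=
        pow_le_pow_left₀ (by positivity) h1 k
    _ = 2 ^ k * (max a b) ^ k := mul_pow 2 _ k
    _ ≤ 2 ^ k * (a ^ k + b ^ k) := by
        apply mul_le_mul_of_nonneg_left _ (by positivity)
        rcases le_total a b with h | h
        · rw [max_eq_right h]; nlinarith [pow_nonneg ha k, pow_nonneg hb k]
        · rw [max_eq_left h]; nlinarith [pow_nonneg ha k, pow_nonneg hb k]

lemma aux_pow_mul_le {a b : ℝ} (ha : 0 ≤ a) (hb : 0 ≤ b) (k : ℕ) :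
    a ^ k * b ^ k ≤ a ^ (2 * k) + b ^ (2 * k) := by
  have h2 : ∀ c : ℝ, 0 ≤ c → c ^ (2 * k) = (c ^ k) ^ 2 := by
    intro c _; rw [← pow_mul, mul_comm]
  rw [h2 a ha, h2 b hb]
  nlinarith [pow_nonneg ha k, pow_nonneg hb k, sq_nonneg (a ^ k - b ^ k)]

lemma AuxNice.abs_pow_int {f : Ω → ℝ} (hf : AuxNice μ f) (k : ℕ) :
    Integrable (fun ω => |f ω| ^ k) μ := by
  refine ((hf.2 k).abs).congr (ae_of_all _ fun ω => ?_)
  simp [abs_pow]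

lemma AuxNice.const (c : ℝ) : AuxNice μ (fun _ => c) := by
  refine ⟨measurable_const, fun k => ?_⟩
  simpa using integrable_const (c ^ k) (μ := μ)

lemma AuxNice.add {f g : Ω → ℝ} (hf : AuxNice μ f) (hg : AuxNice μ g) :
    AuxNice μ (fun ω => f ω + g ω) := by
  refine ⟨hf.1.add hg.1, fun k => ?_⟩
  refine Integrable.mono' (((hf.abs_pow_int k).add (hg.abs_pow_int k)).const_mul (2 ^ k))
    ((hf.1.add hg.1).pow_const k).aestronglyMeasurable (ae_of_all _ fun ω => ?_)
  rw [Real.norm_eq_abs, abs_pow]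
  calc |f ω + g ω| ^ k ≤ (|f ω| + |g ω|) ^ k :=
        pow_le_pow_left₀ (abs_nonneg _) (abs_add_le _ _) k
    _ ≤ 2 ^ k * (|f ω| ^ k + |g ω| ^ k) :=
        aux_pow_add_le (abs_nonneg _) (abs_nonneg _) k

lemma AuxNice.mul {f g : Ω → ℝ} (hf : AuxNice μ f) (hg : AuxNice μ g) :
    AuxNice μ (fun ω => f ω * g ω) := by
  refine ⟨hf.1.mul hg.1, fun k => ?_⟩
  refine Integrable.mono' ((hf.abs_pow_int (2 * k)).add (hg.abs_pow_int (2 * k)))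
    ((hf.1.mul hg.1).pow_const k).aestronglyMeasurable (ae_of_all _ fun ω => ?_)
  rw [Real.norm_eq_abs, abs_pow, abs_mul, mul_pow]
  exact aux_pow_mul_le (abs_nonneg _) (abs_nonneg _) k

lemma AuxNice.pow {f : Ω → ℝ} (hf : AuxNice μ f) (a : ℕ) :
    AuxNice μ (fun ω => f ω ^ a) := by
  refine ⟨hf.1.pow_const a, fun k => ?_⟩
  refine (hf.2 (a * k)).congr (ae_of_all _ fun ω => ?_)
  simp [pow_mul]

lemma AuxNice.integrable {f : Ω → ℝ} (hf : AuxNice μ f) : Integrable f μ := by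
  simpa using hf.2 1

lemma AuxNice.const_mul {f : Ω → ℝ} (hf : AuxNice μ f) (c : ℝ) :
    AuxNice μ (fun ω => c * f ω) := (AuxNice.const c).mul hf

end Nice

lemma aux_mom {Ω : Type*} [MeasurableSpace Ω] (μ : Measure Ω) [IsProbabilityMeasure μ]
    (σ w : ℝ)
    (ξ : ℕ → Ω → ℝ) (hmeas : ∀ t, Measurable (ξ t))
    (hindep : iIndepFun ξ μ)
    (hgauss : ∀ t, Measure.map (ξ t) μ = gaussianReal 0 (Real.toNNReal (σ ^ 2)))
    (x : ℕ → Ω → ℝ)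
    (hxf : ∀ t, ∀ ω, x t ω = ∑ j ∈ Icc 1 t, w ^ (t - j) * ξ j ω)
    (t a b k : ℕ)
    (hint1 : Integrable (fun ω => (∑ i ∈ Icc 1 t, x i ω * x (i - 1) ω) ^ a * x t ω ^ b) μ)
    (hint2 : Integrable (fun ω => ξ (t + 1) ω ^ k) μ) :
    ∫ ω, (∑ i ∈ Icc 1 t, x i ω * x (i - 1) ω) ^ a * x t ω ^ b * ξ (t + 1) ω ^ k ∂μ
      = (∫ ω, (∑ i ∈ Icc 1 t, x i ω * x (i - 1) ω) ^ a * x t ω ^ b ∂μ)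
        * ∫ y, y ^ k ∂(gaussianReal 0 (Real.toNNReal (σ ^ 2))) := by
  classical
  have hdisj : Disjoint (Icc 1 t) ({t + 1} : Finset ℕ) := by
    simp [Finset.disjoint_singleton_right]
  have base := hindep.indepFun_finset (Icc 1 t) {t + 1} hdisj hmeas
  set ext : ((Icc 1 t : Finset ℕ) → ℝ) → ℕ → ℝ :=
    fun vv j => if h : j ∈ Icc 1 t then vv ⟨j, h⟩ else 0 with hext
  have hextm : ∀ j, Measurable (fun vv => ext vv j) := by
    intro j
    by_cases h : j ∈ Icc 1 t
    · simp only [hext, dif_pos h]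
      exact measurable_pi_apply _
    · simp only [hext, dif_neg h]
      exact measurable_const
  set xf : ((Icc 1 t : Finset ℕ) → ℝ) → ℕ → ℝ :=
    fun vv i => ∑ j ∈ Icc 1 i, w ^ (i - j) * ext vv j with hxfdef
  have hxfm : ∀ i, Measurable (fun vv => xf vv i) := fun i =>
    Finset.measurable_sum _ (fun j _ => (hextm j).const_mul _)
  set φ : ((Icc 1 t : Finset ℕ) → ℝ) → ℝ :=
    fun vv => (∑ i ∈ Icc 1 t, xf vv i * xf vv (i - 1)) ^ a * (xf vv t) ^ b with hφ
  have hφm : Measurable φ :=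
    ((Finset.measurable_sum _ (fun i _ => (hxfm i).mul (hxfm (i - 1)))).pow_const a).mul
      ((hxfm t).pow_const b)
  set ψ : (({t + 1} : Finset ℕ) → ℝ) → ℝ :=
    fun vv => (vv ⟨t + 1, by simp⟩) ^ k with hψ
  have hψm : Measurable ψ := (measurable_pi_apply _).pow_const k
  have hI := base.comp hφm hψm
  have hxid : ∀ ω, ∀ i, i ≤ t → xf (fun j : (Icc 1 t : Finset ℕ) => ξ j ω) i = x i ω := by
    intro ω i hi
    rw [hxf i ω, hxfdef]
    refine Finset.sum_congr rfl (fun j hj => ?_)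
    have hjt : j ∈ Icc 1 t := by
      rw [Finset.mem_Icc] at hj ⊢
      exact ⟨hj.1, le_trans hj.2 hi⟩
    rw [hext]
    simp only [dif_pos hjt]
  have hl : (φ ∘ fun ω (i : (Icc 1 t : Finset ℕ)) => ξ i ω)
      = fun ω => (∑ i ∈ Icc 1 t, x i ω * x (i - 1) ω) ^ a * x t ω ^ b := by
    funext ω
    simp only [Function.comp_apply, hφ]
    congr 1
    · congr 1
      refine Finset.sum_congr rfl (fun i hi => ?_)
      have h1 : i ≤ t := (Finset.mem_Icc.mp hi).2
      rw [hxid ω i h1, hxid ω (i - 1) (le_trans (Nat.sub_le i 1) h1)]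
    · rw [hxid ω t le_rfl]
  have hr : (ψ ∘ fun ω (i : ({t + 1} : Finset ℕ)) => ξ i ω)
      = fun ω => ξ (t + 1) ω ^ k := by
    funext ω
    simp [hψ]
  rw [hl, hr] at hI
  have hmul := IndepFun.integral_mul_eq_mul_integral hI hint1.aestronglyMeasurable hint2.aestronglyMeasurable
  have hprod : ((fun ω => (∑ i ∈ Icc 1 t, x i ω * x (i - 1) ω) ^ a * x t ω ^ b)
      * fun ω => ξ (t + 1) ω ^ k)
      = fun ω => (∑ i ∈ Icc 1 t, x i ω * x (i - 1) ω) ^ a * x t ω ^ b * ξ (t + 1) ω ^ k := rfl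
  rw [hprod] at hmul
  rw [hmul]
  congr 1
  rw [← hgauss (t + 1)]
  exact (integral_map (hmeas (t + 1)).aemeasurable
      ((measurable_id.pow_const k).aestronglyMeasurable)).symm
set_option maxHeartbeats 1600000 in
theorem ar1_sixth_moment_cross_limit {Ω : Type*} [MeasurableSpace Ω]
    (μ : Measure Ω) [IsProbabilityMeasure μ]
    (σ w : ℝ) (hσ : 0 < σ) (hw0 : 0 < w) (hw1 : w < 1)
    (ξ : ℕ → Ω → ℝ)
    (hmeas : ∀ t, Measurable (ξ t))
    (hindep : iIndepFun ξ μ)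
    (hgauss : ∀ t, Measure.map (ξ t) μ = gaussianReal 0 (Real.toNNReal (σ ^ 2)))
    (x : ℕ → Ω → ℝ)
    (hx0 : x 0 = fun _ => 0)
    (hrec : ∀ t, x (t + 1) = fun ω => w * x t ω + ξ (t + 1) ω) :
    Tendsto
      (fun t : ℕ =>
        (1 / (t : ℝ) ^ 2) *
          ∫ ω, (∑ i ∈ Icc 1 t, x i ω * x (i - 1) ω) ^ 2 * (x t ω) ^ 2 ∂μ)
      atTop (nhds (σ ^ 6 * w ^ 2 / (1 - w ^ 2) ^ 3)) := by
  classical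
  -- basic definitions
  obtain ⟨S, hSdef⟩ : ∃ S : ℕ → Ω → ℝ,
      S = fun t ω => ∑ i ∈ Icc 1 t, x i ω * x (i - 1) ω := ⟨_, rfl⟩
  obtain ⟨A, hAdef⟩ : ∃ A : ℕ → ℕ → ℕ → ℝ,
      A = fun a b t => ∫ ω, S t ω ^ a * x t ω ^ b ∂μ := ⟨_, rfl⟩
  obtain ⟨Mg, hMgdef⟩ : ∃ Mg : ℕ → ℝ,
      Mg = fun k => ∫ y, y ^ k ∂(gaussianReal 0 (Real.toNNReal (σ ^ 2))) := ⟨_, rfl⟩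
  have hxrec : ∀ t, ∀ ω : Ω, x (t + 1) ω = w * x t ω + ξ (t + 1) ω := by
    intro t ω; rw [hrec t]
  have hS0 : ∀ ω : Ω, S 0 ω = 0 := by intro ω; simp [hSdef]
  have hSrec : ∀ t, ∀ ω : Ω, S (t + 1) ω = S t ω + x (t + 1) ω * x t ω := by
    intro t ω
    simp only [hSdef]
    rw [Finset.sum_Icc_succ_top (Nat.succ_le_succ (Nat.zero_le t))]
    simp
  -- measurability
  have hxm : ∀ t, Measurable (x t) := by
    intro t
    induction t with
    | zero => rw [hx0]; exact measurable_const
    | succ t ih => rw [hrec t]; exact (ih.const_mul w).add (hmeas (t + 1))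
  -- moments exist
  have hNξ : ∀ i, AuxNice μ (ξ i) := by
    intro i
    refine ⟨hmeas i, fun k => ?_⟩
    have h1 := aux_integrable_pow_gaussianReal hσ k
    rw [← hgauss i] at h1
    exact (integrable_map_measure (measurable_id.pow_const k).aestronglyMeasurable
      (hmeas i).aemeasurable).mp h1
  have hNx : ∀ t, AuxNice μ (x t) := by
    intro t
    induction t with
    | zero => rw [hx0]; exact AuxNice.const 0
    | succ t ih => rw [hrec t]; exact (ih.const_mul w).add (hNξ (t + 1))
  have hNS : ∀ t, AuxNice μ (S t) := by
    intro t
    induction t with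
    | zero =>
      have h : S 0 = fun _ : Ω => (0:ℝ) := funext hS0
      rw [h]; exact AuxNice.const 0
    | succ t ih =>
      have h : S (t + 1) = fun ω => S t ω + x (t + 1) ω * x t ω := funext (hSrec t)
      rw [h]; exact ih.add ((hNx (t + 1)).mul (hNx t))
  -- explicit formula for x
  have hxf : ∀ t, ∀ ω : Ω, x t ω = ∑ j ∈ Icc 1 t, w ^ (t - j) * ξ j ω := by
    intro t
    induction t with
    | zero => intro ω; rw [hx0]; simp
    | succ t ih =>
      intro ω
      rw [hxrec t ω, ih ω, Finset.sum_Icc_succ_top (Nat.succ_le_succ (Nat.zero_le t)),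
        Finset.mul_sum]
      simp only [Nat.sub_self, pow_zero, one_mul]
      congr 1
      refine Finset.sum_congr rfl (fun j hj => ?_)
      have hj2 : j ≤ t := (Finset.mem_Icc.mp hj).2
      rw [← mul_assoc, show t + 1 - j = (t - j) + 1 by omega, pow_succ]
      ring
  -- integrability of monomials
  have hintab : ∀ a b t : ℕ, Integrable (fun ω => S t ω ^ a * x t ω ^ b) μ :=
    fun a b t => (((hNS t).pow a).mul ((hNx t).pow b)).integrable
  have hintm : ∀ t a b k : ℕ,
      Integrable (fun ω => S t ω ^ a * x t ω ^ b * ξ (t + 1) ω ^ k) μ :=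
    fun t a b k =>
      ((((hNS t).pow a).mul ((hNx t).pow b)).mul ((hNξ (t + 1)).pow k)).integrable
  -- master moment identity
  have hmom' : ∀ t a b k : ℕ,
      ∫ ω, S t ω ^ a * x t ω ^ b * ξ (t + 1) ω ^ k ∂μ = A a b t * Mg k := by
    intro t a b k
    simp only [hAdef, hMgdef, hSdef]
    exact aux_mom μ σ w ξ hmeas hindep hgauss x hxf t a b k
      (by simpa [hSdef] using hintab a b t) ((hNξ (t + 1)).2 k)
  -- the generic recursion step
  have hstep : ∀ (t N a b : ℕ) (c : Fin N → ℝ) (e1 e2 e3 : Fin N → ℕ),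
      ((fun ω => S (t + 1) ω ^ a * x (t + 1) ω ^ b)
        = fun ω => ∑ j : Fin N, c j * (S t ω ^ e1 j * x t ω ^ e2 j * ξ (t + 1) ω ^ e3 j)) →
      A a b (t + 1) = ∑ j : Fin N, c j * (A (e1 j) (e2 j) t * Mg (e3 j)) := by
    intro t N a b c e1 e2 e3 h
    have h0 : A a b (t + 1)
        = ∫ ω, ∑ j : Fin N, c j * (S t ω ^ e1 j * x t ω ^ e2 j * ξ (t + 1) ω ^ e3 j) ∂μ := by
      simp only [hAdef]
      rw [h]
    rw [h0, integral_finset_sum]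
    · exact Finset.sum_congr rfl fun j _ => by
        rw [integral_const_mul, hmom' t (e1 j) (e2 j) (e3 j)]
    · exact fun j _ => (hintm t (e1 j) (e2 j) (e3 j)).const_mul (c j)
  -- gaussian moment values
  have hM0 : Mg 0 = 1 := by rw [hMgdef]; exact aux_M_zero hσ
  have hM1 : Mg 1 = 0 := by rw [hMgdef]; exact aux_M_one hσ
  have hM2 : Mg 2 = σ ^ 2 := by rw [hMgdef]; exact aux_M_two hσ
  have hM3 : Mg 3 = 0 := by rw [hMgdef]; exact aux_M_three hσ
  have hM4 : Mg 4 = 3 * σ ^ 4 := by rw [hMgdef]; exact aux_M_four hσ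
  have hM5 : Mg 5 = 0 := by rw [hMgdef]; exact aux_M_five hσ
  have hM6 : Mg 6 = 15 * σ ^ 6 := by rw [hMgdef]; exact aux_M_six hσ
  have hA00 : ∀ t, A 0 0 t = 1 := by
    intro t
    simp only [hAdef, pow_zero, one_mul]
    simp
  -- initial values
  have hA10_0 : A 1 0 0 = 0 := by
    simp only [hAdef]
    rw [show (fun ω : Ω => S 0 ω ^ 1 * x 0 ω ^ 0) = fun _ => (0:ℝ) from
      funext fun ω => by rw [hS0 ω]; ring]
    simp
  have hA20_0 : A 2 0 0 = 0 := by
    simp only [hAdef]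
    rw [show (fun ω : Ω => S 0 ω ^ 2 * x 0 ω ^ 0) = fun _ => (0:ℝ) from
      funext fun ω => by rw [hS0 ω]; ring]
    simp
  have R02 : ∀ t : ℕ, A 0 2 (t + 1) = σ ^ 2 + w ^ 2 * A 0 2 t := by
    intro t
    rw [hstep t 3 0 2 ![(1 : ℝ), (2 * w : ℝ), (w ^ 2 : ℝ)] ![0, 0, 0] ![0, 1, 2] ![2, 1, 0]
      (by funext ω
          rw [hSrec t ω, hxrec t ω]
          simp [Fin.sum_univ_succ]
          ring)]
    simp [Fin.sum_univ_succ, hM0, hM1, hM2, hM3, hM4, hM5, hM6, hA00]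
    try ring
  have R04 : ∀ t : ℕ, A 0 4 (t + 1) = 3 * σ ^ 4 + 6 * w ^ 2 * σ ^ 2 * A 0 2 t + w ^ 4 * A 0 4 t := by
    intro t
    rw [hstep t 5 0 4 ![(1 : ℝ), (4 * w : ℝ), (6 * w ^ 2 : ℝ), (4 * w ^ 3 : ℝ), (w ^ 4 : ℝ)] ![0, 0, 0, 0, 0] ![0, 1, 2, 3, 4] ![4, 3, 2, 1, 0]
      (by funext ω
          rw [hSrec t ω, hxrec t ω]
          simp [Fin.sum_univ_succ]
          ring)]
    simp [Fin.sum_univ_succ, hM0, hM1, hM2, hM3, hM4, hM5, hM6, hA00]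
    try ring
  have R06 : ∀ t : ℕ, A 0 6 (t + 1) = 15 * σ ^ 6 + 45 * w ^ 2 * σ ^ 4 * A 0 2 t + 15 * w ^ 4 * σ ^ 2 * A 0 4 t + w ^ 6 * A 0 6 t := by
    intro t
    rw [hstep t 7 0 6 ![(1 : ℝ), (6 * w : ℝ), (15 * w ^ 2 : ℝ), (20 * w ^ 3 : ℝ), (15 * w ^ 4 : ℝ), (6 * w ^ 5 : ℝ), (w ^ 6 : ℝ)] ![0, 0, 0, 0, 0, 0, 0] ![0, 1, 2, 3, 4, 5, 6] ![6, 5, 4, 3, 2, 1, 0]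
      (by funext ω
          rw [hSrec t ω, hxrec t ω]
          simp [Fin.sum_univ_succ]
          ring)]
    simp [Fin.sum_univ_succ, hM0, hM1, hM2, hM3, hM4, hM5, hM6, hA00]
    try ring
  have R10 : ∀ t : ℕ, A 1 0 (t + 1) = w * A 0 2 t + 1 * A 1 0 t := by
    intro t
    rw [hstep t 3 1 0 ![(1 : ℝ), (w : ℝ), (1 : ℝ)] ![0, 0, 1] ![1, 2, 0] ![1, 0, 0]
      (by funext ω
          rw [hSrec t ω, hxrec t ω]
          simp [Fin.sum_univ_succ]
          ring)]
    simp [Fin.sum_univ_succ, hM0, hM1, hM2, hM3, hM4, hM5, hM6, hA00]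
    try ring
  have R12 : ∀ t : ℕ, A 1 2 (t + 1) = 3 * w * σ ^ 2 * A 0 2 t + w ^ 3 * A 0 4 t + σ ^ 2 * A 1 0 t + w ^ 2 * A 1 2 t := by
    intro t
    rw [hstep t 7 1 2 ![(1 : ℝ), (3 * w : ℝ), (3 * w ^ 2 : ℝ), (w ^ 3 : ℝ), (1 : ℝ), (2 * w : ℝ), (w ^ 2 : ℝ)] ![0, 0, 0, 0, 1, 1, 1] ![1, 2, 3, 4, 0, 1, 2] ![3, 2, 1, 0, 2, 1, 0]
      (by funext ω
          rw [hSrec t ω, hxrec t ω]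
          simp [Fin.sum_univ_succ]
          ring)]
    simp [Fin.sum_univ_succ, hM0, hM1, hM2, hM3, hM4, hM5, hM6, hA00]
    try ring
  have R14 : ∀ t : ℕ, A 1 4 (t + 1) = 15 * w * σ ^ 4 * A 0 2 t + 10 * w ^ 3 * σ ^ 2 * A 0 4 t + w ^ 5 * A 0 6 t + 3 * σ ^ 4 * A 1 0 t + 6 * w ^ 2 * σ ^ 2 * A 1 2 t + w ^ 4 * A 1 4 t := by
    intro t
    rw [hstep t 11 1 4 ![(1 : ℝ), (5 * w : ℝ), (10 * w ^ 2 : ℝ), (10 * w ^ 3 : ℝ), (5 * w ^ 4 : ℝ), (w ^ 5 : ℝ), (1 : ℝ), (4 * w : ℝ), (6 * w ^ 2 : ℝ), (4 * w ^ 3 : ℝ), (w ^ 4 : ℝ)] ![0, 0, 0, 0, 0, 0, 1, 1, 1, 1, 1] ![1, 2, 3, 4, 5, 6, 0, 1, 2, 3, 4] ![5, 4, 3, 2, 1, 0, 4, 3, 2, 1, 0]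
      (by funext ω
          rw [hSrec t ω, hxrec t ω]
          simp [Fin.sum_univ_succ]
          ring)]
    simp [Fin.sum_univ_succ, hM0, hM1, hM2, hM3, hM4, hM5, hM6, hA00]
    try ring
  have R20 : ∀ t : ℕ, A 2 0 (t + 1) = σ ^ 2 * A 0 2 t + w ^ 2 * A 0 4 t + 2 * w * A 1 2 t + 1 * A 2 0 t := by
    intro t
    rw [hstep t 6 2 0 ![(1 : ℝ), (2 * w : ℝ), (w ^ 2 : ℝ), (2 : ℝ), (2 * w : ℝ), (1 : ℝ)] ![0, 0, 0, 1, 1, 2] ![2, 3, 4, 1, 2, 0] ![2, 1, 0, 1, 0, 0]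
      (by funext ω
          rw [hSrec t ω, hxrec t ω]
          simp [Fin.sum_univ_succ]
          ring)]
    simp [Fin.sum_univ_succ, hM0, hM1, hM2, hM3, hM4, hM5, hM6, hA00]
    try ring
  have R22 : ∀ t : ℕ, A 2 2 (t + 1) = 3 * σ ^ 4 * A 0 2 t + 6 * w ^ 2 * σ ^ 2 * A 0 4 t + w ^ 4 * A 0 6 t + 6 * w * σ ^ 2 * A 1 2 t + 2 * w ^ 3 * A 1 4 t + σ ^ 2 * A 2 0 t + w ^ 2 * A 2 2 t := by
    intro t
    rw [hstep t 12 2 2 ![(1 : ℝ), (4 * w : ℝ), (6 * w ^ 2 : ℝ), (4 * w ^ 3 : ℝ), (w ^ 4 : ℝ), (2 : ℝ), (6 * w : ℝ), (6 * w ^ 2 : ℝ), (2 * w ^ 3 : ℝ), (1 : ℝ), (2 * w : ℝ), (w ^ 2 : ℝ)] ![0, 0, 0, 0, 0, 1, 1, 1, 1, 2, 2, 2] ![2, 3, 4, 5, 6, 1, 2, 3, 4, 0, 1, 2] ![4, 3, 2, 1, 0, 3, 2, 1, 0, 2, 1, 0]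
      (by funext ω
          rw [hSrec t ω, hxrec t ω]
          simp [Fin.sum_univ_succ]
          ring)]
    simp [Fin.sum_univ_succ, hM0, hM1, hM2, hM3, hM4, hM5, hM6, hA00]
    try ring
  -- ratio lemma
  have aux_ratio : Tendsto (fun t : ℕ => (t : ℝ) / ((t : ℝ) + 1)) atTop (nhds 1) := by
    have h1 : Tendsto (fun t : ℕ => 1 - 1 / ((t : ℝ) + 1)) atTop (nhds (1 - 0)) :=
      tendsto_const_nhds.sub tendsto_one_div_add_atTop_nhds_zero_nat
    rw [sub_zero] at h1
    refine h1.congr fun t => ?_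
    have ht : ((t : ℝ) + 1) ≠ 0 := by positivity
    field_simp
    ring
  have honet : Tendsto (fun t : ℕ => 1 / ((t : ℝ) + 1)) atTop (nhds 0) :=
    tendsto_one_div_add_atTop_nhds_zero_nat
  have honet' : Tendsto (fun t : ℕ => 1 / (t : ℝ)) atTop (nhds 0) := by
    exact tendsto_one_div_atTop_nhds_zero_nat
  -- basic constants
  have hw2 : w ^ 2 < 1 := by nlinarith
  have hw20 : (0:ℝ) ≤ w ^ 2 := sq_nonneg w
  have hw4 : w ^ 4 < 1 := by nlinarith
  have hw40 : (0:ℝ) ≤ w ^ 4 := by positivity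
  have hw6 : w ^ 6 < 1 := by nlinarith
  have hw60 : (0:ℝ) ≤ w ^ 6 := by positivity
  have h1w2 : (0:ℝ) < 1 - w ^ 2 := by linarith
  set v : ℝ := σ ^ 2 / (1 - w ^ 2) with hv
  -- limit of A 0 2
  have T02 : Tendsto (A 0 2) atTop (nhds v) := by
    rw [hv]
    exact aux_contract hw20 hw2 tendsto_const_nhds (fun _ => hw20) tendsto_const_nhds
      (fun t _ => by rw [R02 t]; ring)
  -- limit of A 0 4
  set L4 : ℝ := (6 * w ^ 2 * σ ^ 2 * v + 3 * σ ^ 4) / (1 - w ^ 4) with hL4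
  have T04 : Tendsto (A 0 4) atTop (nhds L4) := by
    rw [hL4]
    refine aux_contract hw40 hw4 tendsto_const_nhds (fun _ => hw40)
      (b := fun t => 6 * w ^ 2 * σ ^ 2 * A 0 2 t + 3 * σ ^ 4) ?_ (fun t _ => by rw [R04 t]; ring)
    simpa using (T02.const_mul (6 * w ^ 2 * σ ^ 2)).add_const (3 * σ ^ 4)
  -- limit of A 0 6
  set L6 : ℝ := (45 * w ^ 2 * σ ^ 4 * v + 15 * w ^ 4 * σ ^ 2 * L4 + 15 * σ ^ 6) / (1 - w ^ 6)
    with hL6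
  have T06 : Tendsto (A 0 6) atTop (nhds L6) := by
    rw [hL6]
    refine aux_contract hw60 hw6 tendsto_const_nhds (fun _ => hw60)
      (b := fun t => 45 * w ^ 2 * σ ^ 4 * A 0 2 t + 15 * w ^ 4 * σ ^ 2 * A 0 4 t + 15 * σ ^ 6)
      ?_ (fun t _ => by rw [R06 t]; ring)
    simpa using ((T02.const_mul (45 * w ^ 2 * σ ^ 4)).add
      (T04.const_mul (15 * w ^ 4 * σ ^ 2))).add_const (15 * σ ^ 6)
  -- limit of A 1 0 / t
  have hsum10 : ∀ t, A 1 0 t = ∑ i ∈ range t, w * A 0 2 i := by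
    intro t
    induction t with
    | zero => simpa using hA10_0
    | succ t ih => rw [R10 t, ih, Finset.sum_range_succ]; ring
  have T10 : Tendsto (fun t : ℕ => A 1 0 t / (t : ℝ)) atTop (nhds (w * v)) := by
    have h1 := (T02.const_mul w).cesaro
    refine h1.congr fun t => ?_
    rw [hsum10 t, div_eq_inv_mul]
  -- limit of A 1 2 / t
  set L12 : ℝ := σ ^ 2 * (w * v) / (1 - w ^ 2) with hL12
  have T12 : Tendsto (fun t : ℕ => A 1 2 t / (t : ℝ)) atTop (nhds L12) := by
    rw [hL12]
    refine aux_contract hw20 hw2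
      (c := fun t : ℕ => w ^ 2 * ((t : ℝ) / ((t : ℝ) + 1)))
      (b := fun t : ℕ => (3 * w * σ ^ 2 * A 0 2 t + w ^ 3 * A 0 4 t + σ ^ 2 * A 1 0 t)
        / ((t : ℝ) + 1))
      ?_ (fun t => by positivity) ?_ ?_
    · simpa using aux_ratio.const_mul (w ^ 2)
    · have hb' : Tendsto (fun t : ℕ =>
          σ ^ 2 * (A 1 0 t / (t : ℝ) * ((t : ℝ) / ((t : ℝ) + 1)))
          + (3 * w * σ ^ 2 * A 0 2 t + w ^ 3 * A 0 4 t) * (1 / ((t : ℝ) + 1)))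
          atTop (nhds (σ ^ 2 * (w * v * 1) + (3 * w * σ ^ 2 * v + w ^ 3 * L4) * 0)) := by
        exact ((T10.mul aux_ratio).const_mul (σ ^ 2)).add
          (((T02.const_mul (3 * w * σ ^ 2)).add (T04.const_mul (w ^ 3))).mul honet)
      simp only [mul_one, mul_zero, add_zero] at hb'
      refine hb'.congr' ?_
      filter_upwards [eventually_ge_atTop 1] with t ht
      have ht0 : (t : ℝ) ≠ 0 := Nat.cast_ne_zero.mpr (by omega)
      have ht1 : ((t : ℝ) + 1) ≠ 0 := by positivity
      field_simp
      ring
    · intro t ht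
      have ht0 : (t : ℝ) ≠ 0 := Nat.cast_ne_zero.mpr (by omega)
      have ht1 : ((t : ℝ) + 1) ≠ 0 := by positivity
      rw [R12 t]
      push_cast
      field_simp
      ring
  -- limit of A 1 4 / t
  set L14 : ℝ := (3 * σ ^ 4 * (w * v) + 6 * w ^ 2 * σ ^ 2 * L12) / (1 - w ^ 4) with hL14
  have T14 : Tendsto (fun t : ℕ => A 1 4 t / (t : ℝ)) atTop (nhds L14) := by
    rw [hL14]
    refine aux_contract hw40 hw4
      (c := fun t : ℕ => w ^ 4 * ((t : ℝ) / ((t : ℝ) + 1)))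
      (b := fun t : ℕ => (15 * w * σ ^ 4 * A 0 2 t + 10 * w ^ 3 * σ ^ 2 * A 0 4 t
        + w ^ 5 * A 0 6 t + 3 * σ ^ 4 * A 1 0 t + 6 * w ^ 2 * σ ^ 2 * A 1 2 t) / ((t : ℝ) + 1))
      ?_ (fun t => by positivity) ?_ ?_
    · simpa using aux_ratio.const_mul (w ^ 4)
    · have hb' : Tendsto (fun t : ℕ =>
          (3 * σ ^ 4 * (A 1 0 t / (t : ℝ)) + 6 * w ^ 2 * σ ^ 2 * (A 1 2 t / (t : ℝ)))
            * ((t : ℝ) / ((t : ℝ) + 1))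
          + (15 * w * σ ^ 4 * A 0 2 t + 10 * w ^ 3 * σ ^ 2 * A 0 4 t + w ^ 5 * A 0 6 t)
            * (1 / ((t : ℝ) + 1)))
          atTop (nhds ((3 * σ ^ 4 * (w * v) + 6 * w ^ 2 * σ ^ 2 * L12) * 1
            + (15 * w * σ ^ 4 * v + 10 * w ^ 3 * σ ^ 2 * L4 + w ^ 5 * L6) * 0)) := by
        exact (((T10.const_mul (3 * σ ^ 4)).add (T12.const_mul (6 * w ^ 2 * σ ^ 2))).mul
          aux_ratio).add
          ((((T02.const_mul (15 * w * σ ^ 4)).add (T04.const_mul (10 * w ^ 3 * σ ^ 2))).add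
            (T06.const_mul (w ^ 5))).mul honet)
      simp only [mul_one, mul_zero, add_zero] at hb'
      refine hb'.congr' ?_
      filter_upwards [eventually_ge_atTop 1] with t ht
      have ht0 : (t : ℝ) ≠ 0 := Nat.cast_ne_zero.mpr (by omega)
      have ht1 : ((t : ℝ) + 1) ≠ 0 := by positivity
      field_simp
      ring
    · intro t ht
      have ht0 : (t : ℝ) ≠ 0 := Nat.cast_ne_zero.mpr (by omega)
      have ht1 : ((t : ℝ) + 1) ≠ 0 := by positivity
      rw [R14 t]
      push_cast
      field_simp
      ring
  -- limit of A 2 0 / t²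
  have hsum20 : ∀ t, A 2 0 t
      = ∑ i ∈ range t, (σ ^ 2 * A 0 2 i + w ^ 2 * A 0 4 i + 2 * w * A 1 2 i) := by
    intro t
    induction t with
    | zero => simpa using hA20_0
    | succ t ih => rw [R20 t, ih, Finset.sum_range_succ]; ring
  have T20 : Tendsto (fun t : ℕ => A 2 0 t / (t : ℝ) ^ 2) atTop (nhds (2 * w * L12 / 2)) := by
    have hd : Tendsto (fun t : ℕ =>
        (σ ^ 2 * A 0 2 t + w ^ 2 * A 0 4 t + 2 * w * A 1 2 t) / (t : ℝ))
        atTop (nhds (2 * w * L12)) := by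
      have hd' : Tendsto (fun t : ℕ =>
          2 * w * (A 1 2 t / (t : ℝ))
          + (σ ^ 2 * A 0 2 t + w ^ 2 * A 0 4 t) * (1 / (t : ℝ)))
          atTop (nhds (2 * w * L12 + (σ ^ 2 * v + w ^ 2 * L4) * 0)) :=
        (T12.const_mul (2 * w)).add
          (((T02.const_mul (σ ^ 2)).add (T04.const_mul (w ^ 2))).mul honet')
      simp only [mul_one, mul_zero, add_zero] at hd'
      refine hd'.congr' ?_
      filter_upwards [eventually_ge_atTop 1] with t ht
      have ht0 : (t : ℝ) ≠ 0 := Nat.cast_ne_zero.mpr (by omega)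
      field_simp
      ring
    have := aux_cesaro_sq hd
    refine this.congr fun t => ?_
    rw [hsum20 t]
  -- limit of A 2 2 / t²
  have T22 : Tendsto (fun t : ℕ => A 2 2 t / (t : ℝ) ^ 2) atTop
      (nhds (σ ^ 2 * (2 * w * L12 / 2) / (1 - w ^ 2))) := by
    refine aux_contract hw20 hw2
      (c := fun t : ℕ => w ^ 2 * (((t : ℝ) / ((t : ℝ) + 1)) * ((t : ℝ) / ((t : ℝ) + 1))))
      (b := fun t : ℕ => (3 * σ ^ 4 * A 0 2 t + 6 * w ^ 2 * σ ^ 2 * A 0 4 t + w ^ 4 * A 0 6 t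
        + 6 * w * σ ^ 2 * A 1 2 t + 2 * w ^ 3 * A 1 4 t + σ ^ 2 * A 2 0 t)
        / (((t : ℝ) + 1) * ((t : ℝ) + 1)))
      ?_ (fun t => by positivity) ?_ ?_
    · have := (aux_ratio.mul aux_ratio).const_mul (w ^ 2)
      simpa using this
    · have hb' : Tendsto (fun t : ℕ =>
          σ ^ 2 * ((A 2 0 t / (t : ℝ) ^ 2) * (((t : ℝ) / ((t : ℝ) + 1)) * ((t : ℝ) / ((t : ℝ) + 1))))
          + (6 * w * σ ^ 2 * (A 1 2 t / (t : ℝ)) + 2 * w ^ 3 * (A 1 4 t / (t : ℝ)))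
            * (((t : ℝ) / ((t : ℝ) + 1)) * (1 / ((t : ℝ) + 1)))
          + (3 * σ ^ 4 * A 0 2 t + 6 * w ^ 2 * σ ^ 2 * A 0 4 t + w ^ 4 * A 0 6 t)
            * ((1 / ((t : ℝ) + 1)) * (1 / ((t : ℝ) + 1))))
          atTop (nhds (σ ^ 2 * ((2 * w * L12 / 2) * (1 * 1))
            + (6 * w * σ ^ 2 * L12 + 2 * w ^ 3 * L14) * (1 * 0)
            + (3 * σ ^ 4 * v + 6 * w ^ 2 * σ ^ 2 * L4 + w ^ 4 * L6) * (0 * 0))) := by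
        exact (((T20.mul (aux_ratio.mul aux_ratio)).const_mul (σ ^ 2)).add
          (((T12.const_mul (6 * w * σ ^ 2)).add (T14.const_mul (2 * w ^ 3))).mul
            (aux_ratio.mul honet))).add
          ((((T02.const_mul (3 * σ ^ 4)).add (T04.const_mul (6 * w ^ 2 * σ ^ 2))).add
            (T06.const_mul (w ^ 4))).mul (honet.mul honet))
      simp only [mul_one, mul_zero, add_zero, one_mul] at hb'
      refine hb'.congr' ?_
      filter_upwards [eventually_ge_atTop 1] with t ht
      have ht0 : (t : ℝ) ≠ 0 := Nat.cast_ne_zero.mpr (by omega)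
      have ht1 : ((t : ℝ) + 1) ≠ 0 := by positivity
      field_simp
      ring
    · intro t ht
      have ht0 : (t : ℝ) ≠ 0 := Nat.cast_ne_zero.mpr (by omega)
      have ht1 : ((t : ℝ) + 1) ≠ 0 := by positivity
      rw [R22 t]
      push_cast
      field_simp
      ring
  -- conclusion
  have hfinal : σ ^ 2 * (2 * w * L12 / 2) / (1 - w ^ 2) = σ ^ 6 * w ^ 2 / (1 - w ^ 2) ^ 3 := by
    rw [hL12, hv]
    field_simp
  rw [← hfinal]
  refine T22.congr fun t => ?_
  simp only [hAdef, hSdef]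
  ring
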